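/- For every real p with 1/2 < p < 1 and every real a > 0, one has (p/(1−p))^{a·p·(1−p)/(2p−1)} ≤ e^{a/2}. Equivalently, p·(1−p)·ln(p/(1−p)) ≤ (2p−1)/2 for all 1/2 < p < 1. -/

import Mathlib

lemma log_le_half_sub_inv {x : ℝ} (hx : 1 ≤ x) : Real.log x ≤ (x - x⁻¹) / 2 := by
  set g : ℝ → ℝ := fun y => (y - y⁻¹) / 2 - Real.log y with hg
  have hderiv : ∀ y ∈ Set.Ioi (1:ℝ), HasDerivAt g ((y - 1)^2 / (2 * y^2)) y := by
    intro y hy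
    have hy0 : (0:ℝ) < y := lt_trans one_pos hy
    have h1 : HasDerivAt (fun y : ℝ => (y - y⁻¹) / 2) ((1 - -(y^2)⁻¹) / 2) y := by
      have := (hasDerivAt_id y).sub (hasDerivAt_inv hy0.ne')
      simpa using this.div_const 2
    have h2 : HasDerivAt Real.log y⁻¹ y := Real.hasDerivAt_log hy0.ne'
    have := h1.sub h2
    convert this using 1
    · rfl
    · rfl
    · rfl
    · field_simp
      ring
  have hcont : ContinuousOn g (Set.Ici 1) := by
    intro y hy
    have hy0 : (0:ℝ) < y := lt_of_lt_of_le one_pos hy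
    exact (((continuousAt_id.sub (continuousAt_inv₀ hy0.ne')).div_const 2).sub
      (Real.continuousAt_log hy0.ne')).continuousWithinAt
  have hmono : MonotoneOn g (Set.Ici 1) := by
    apply monotoneOn_of_deriv_nonneg (convex_Ici 1) hcont
    · intro y hy
      rw [interior_Ici] at hy
      exact (hderiv y hy).differentiableAt.differentiableWithinAt
    · intro y hy
      rw [interior_Ici] at hy
      rw [(hderiv y hy).deriv]
      positivity
  have h0 : g 1 ≤ g x := hmono (by simp) hx hx
  have hg1 : g 1 = 0 := by simp [hg]
  rw [hg1] at h0
  simpa [hg] using h0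

theorem odds_ratio_power_bound (p : ℝ) (hp0 : 1/2 < p) (hp1 : p < 1) :
    (∀ a : ℝ, 0 < a →
      (p / (1 - p)) ^ (a * p * (1 - p) / (2 * p - 1)) ≤ Real.exp (a / 2)) ∧
    p * (1 - p) * Real.log (p / (1 - p)) ≤ (2 * p - 1) / 2 := by
  have hq : (0:ℝ) < 1 - p := by linarith
  have hp : (0:ℝ) < p := by linarith
  have hx1 : (1:ℝ) ≤ p / (1 - p) := (le_div_iff₀ hq).mpr (by linarith)
  have hxpos : (0:ℝ) < p / (1 - p) := lt_of_lt_of_le one_pos hx1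
  have key : p * (1 - p) * Real.log (p / (1 - p)) ≤ (2 * p - 1) / 2 := by
    have h := log_le_half_sub_inv hx1
    have h2 : p * (1 - p) * Real.log (p / (1 - p)) ≤
        p * (1 - p) * ((p / (1 - p) - (p / (1 - p))⁻¹) / 2) :=
      mul_le_mul_of_nonneg_left h (by positivity)
    have h3 : p * (1 - p) * ((p / (1 - p) - (p / (1 - p))⁻¹) / 2) = (2 * p - 1) / 2 := by
      field_simp
      ring
    linarith
  refine ⟨fun a ha => ?_, key⟩
  rw [Real.rpow_def_of_pos hxpos, Real.exp_le_exp]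
  have h2 : (0:ℝ) < 2 * p - 1 := by linarith
  rw [mul_comm, div_mul_eq_mul_div, div_le_iff₀ h2]
  nlinarith [mul_le_mul_of_nonneg_left key ha.le]
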